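/- Let f belong to F^coord_{0,L}(ℝ^d). Then for every block index ℓ ∈ {1,…,p} and all x₁, x₂ ∈ ℝ^d, the quadratic lower bound holds: f(x₂) ≥ f(x₁) + ⟨∇f(x₁), x₂ − x₁⟩ + (1/(2L_ℓ))‖∇^{(ℓ)} f(x₁) − ∇^{(ℓ)} f(x₂)‖². -/

import Mathlib

open RealInnerProductSpace

noncomputable section

/-- The `ℓ`-th block `ℝ^{d_ℓ}` of the decomposition `ℝ^d = ℝ^{d_1} × … × ℝ^{d_p}`. -/
abbrev Blk {p : ℕ} (d : Fin p → ℕ) (ℓ : Fin p) : Type := EuclideanSpace ℝ (Fin (d ℓ))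

/-- The space `ℝ^d = ℝ^{d_1} × … × ℝ^{d_p}` with the Euclidean (ℓ²) norm. -/
abbrev Sp {p : ℕ} (d : Fin p → ℕ) : Type := PiLp 2 (Blk d)

/-- The selection embedding `U_ℓ : ℝ^{d_ℓ} → ℝ^d` placing `h` in block `ℓ` and `0` elsewhere. -/
def inj {p : ℕ} (d : Fin p → ℕ) (ℓ : Fin p) (h : Blk d ℓ) : Sp d :=
  (WithLp.equiv 2 (∀ ℓ, Blk d ℓ)).symm (Pi.single ℓ h)

/-- Membership in the class `F^coord_{0,L}(ℝ^d)`: convex, differentiable, and for each block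
`ℓ` the partial gradient `∇^{(ℓ)} f` is `L_ℓ`-Lipschitz along the block `ℓ`. -/
def IsCoordSmooth {p : ℕ} (d : Fin p → ℕ) (L : Fin p → ℝ) (f : Sp d → ℝ) : Prop :=
  ConvexOn ℝ Set.univ f ∧ Differentiable ℝ f ∧
    ∀ (ℓ : Fin p) (x : Sp d) (h : Blk d ℓ),
      ‖gradient f (x + inj d ℓ h) ℓ - gradient f x ℓ‖ ≤ L ℓ * ‖h‖

variable {p : ℕ} {d : Fin p → ℕ}

lemma inj_smul (ℓ : Fin p) (t : ℝ) (h : Blk d ℓ) : inj d ℓ (t • h) = t • inj d ℓ h := by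
  ext i
  simp [inj, Pi.single_smul]

lemma inner_inj (ℓ : Fin p) (g : Sp d) (h : Blk d ℓ) : ⟪g, inj d ℓ h⟫ = ⟪g ℓ, h⟫ := by
  rw [PiLp.inner_apply]
  rw [Finset.sum_eq_single ℓ]
  · have : (inj d ℓ h) ℓ = h := by simp [inj]
    rw [this]
  · intro i _ hi
    have : (inj d ℓ h) i = 0 := by simp [inj, Pi.single_apply, hi]
    rw [this, inner_zero_right]
  · simp

lemma hasDerivAt_line {f : Sp d → ℝ} (hf : Differentiable ℝ f) (x v : Sp d) (t : ℝ) :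
    HasDerivAt (fun s : ℝ => f (x + s • v)) ⟪gradient f (x + t • v), v⟫ t := by
  have h1 : HasDerivAt (fun s : ℝ => x + s • v) v t := by
    simpa using ((hasDerivAt_id t).smul_const v).const_add x
  have h2 := (hf (x + t • v)).hasGradientAt.hasFDerivAt
  have := h2.comp_hasDerivAt t h1
  have h4 : HasDerivAt (fun s : ℝ => f (x + s • v))
      (InnerProductSpace.toDual ℝ (Sp d) (gradient f (x + t • v)) v) t := this
  simpa only [InnerProductSpace.toDual_apply_apply] using h4

lemma convex_lower {f : Sp d → ℝ} (hconv : ConvexOn ℝ Set.univ f)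
    (hf : Differentiable ℝ f) (x y : Sp d) :
    f x + ⟪gradient f x, y - x⟫ ≤ f y := by
  set v := y - x with hv
  have hg : ConvexOn ℝ Set.univ (fun t : ℝ => f (x + t • v)) := by
    have := hconv.comp_affineMap (AffineMap.lineMap x y)
    have he : (f ∘ (AffineMap.lineMap x y)) = fun t : ℝ => f (x + t • v) := by
      funext t
      simp [AffineMap.lineMap_apply, hv, add_comm]
    rw [he] at this
    simpa using this
  have hderiv := hasDerivAt_line hf x v 0
  simp only [zero_smul, add_zero] at hderiv
  have hs := hg.le_slope_of_hasDerivAt (Set.mem_univ 0) (Set.mem_univ 1) one_pos hderiv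
  rw [slope_def_field] at hs
  simp only [one_smul, zero_smul, add_zero] at hs
  have : x + v = y := by rw [hv]; abel
  rw [this] at hs
  have h1 : (f y - f x) / (1 - 0) = f y - f x := by norm_num
  linarith [hs.trans_eq h1]

lemma descent {L : Fin p → ℝ} {f : Sp d → ℝ} (hdiff : Differentiable ℝ f)
    (hlip : ∀ (ℓ : Fin p) (x : Sp d) (h : Blk d ℓ),
      ‖gradient f (x + inj d ℓ h) ℓ - gradient f x ℓ‖ ≤ L ℓ * ‖h‖)
    (ℓ : Fin p) (hL : 0 < L ℓ) (x : Sp d) (h : Blk d ℓ) :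
    f (x + inj d ℓ h) ≤ f x + ⟪gradient f x ℓ, h⟫ + L ℓ / 2 * ‖h‖ ^ 2 := by
  set v := inj d ℓ h with hv
  set φ : ℝ → ℝ := fun t =>
    f (x + t • v) - t * ⟪gradient f x ℓ, h⟫ - L ℓ * ‖h‖ ^ 2 * t ^ 2 / 2 with hφ
  have hφd : ∀ t : ℝ, HasDerivAt φ
      (⟪gradient f (x + t • v), v⟫ - ⟪gradient f x ℓ, h⟫ - L ℓ * ‖h‖ ^ 2 * t) t := by
    intro t
    have h1 := hasDerivAt_line hdiff x v t
    have h2 : HasDerivAt (fun t : ℝ => t * ⟪gradient f x ℓ, h⟫) ⟪gradient f x ℓ, h⟫ t := by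
      simpa using (hasDerivAt_id t).mul_const ⟪gradient f x ℓ, h⟫
    have h3 : HasDerivAt (fun t : ℝ => L ℓ * ‖h‖ ^ 2 * t ^ 2 / 2) (L ℓ * ‖h‖ ^ 2 * t) t := by
      have := ((hasDerivAt_pow 2 t).const_mul (L ℓ * ‖h‖ ^ 2)).div_const 2
      convert this using 1
      · rfl
      · rfl
      · ring
    exact (h1.sub h2).sub h3
  have hnonpos : ∀ t ∈ Set.Ioo (0:ℝ) 1, deriv φ t ≤ 0 := by
    intro t ht
    rw [(hφd t).deriv]
    have key : ⟪gradient f (x + t • v), v⟫ - ⟪gradient f x ℓ, h⟫ ≤ L ℓ * ‖h‖ ^ 2 * t := by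
      rw [inner_inj, ← inner_sub_left]
      have htv : x + t • v = x + inj d ℓ (t • h) := by rw [inj_smul]
      calc ⟪gradient f (x + t • v) ℓ - gradient f x ℓ, h⟫
          ≤ ‖gradient f (x + t • v) ℓ - gradient f x ℓ‖ * ‖h‖ := real_inner_le_norm _ _
        _ ≤ (L ℓ * ‖t • h‖) * ‖h‖ := by
            apply mul_le_mul_of_nonneg_right _ (norm_nonneg h)
            rw [htv]; exact hlip ℓ x (t • h)
        _ ≤ L ℓ * ‖h‖ ^ 2 * t := by
            rw [norm_smul, Real.norm_eq_abs, abs_of_pos ht.1]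
            ring_nf; rfl
    linarith
  have hdφ : Differentiable ℝ φ := fun t => (hφd t).differentiableAt
  have hcont : ContinuousOn φ (Set.Icc 0 1) := hdφ.continuous.continuousOn
  have hdiffOn : DifferentiableOn ℝ φ (interior (Set.Icc (0:ℝ) 1)) :=
    fun t _ => (hφd t).differentiableAt.differentiableWithinAt
  have hanti := antitoneOn_of_deriv_nonpos (convex_Icc 0 1) hcont hdiffOn
    (by rwa [interior_Icc])
  have h01 := hanti (Set.mem_Icc.mpr ⟨le_refl 0, zero_le_one⟩)
    (Set.mem_Icc.mpr ⟨zero_le_one, le_refl 1⟩) zero_le_one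
  simp only [hφ, zero_smul, add_zero, one_smul] at h01
  have : f (x + v) - ⟪gradient f x ℓ, h⟫ - L ℓ * ‖h‖ ^ 2 / 2 ≤ f x := by
    have := h01
    norm_num at this
    linarith
  linarith


theorem block_quadratic_lower_bound {p : ℕ} {d : Fin p → ℕ} (L : Fin p → ℝ)
    (hL : ∀ ℓ, 0 < L ℓ) (f : Sp d → ℝ) (hf : IsCoordSmooth d L f) :
    ∀ (ℓ : Fin p) (x₁ x₂ : Sp d),
      f x₂ ≥ f x₁ + ⟪gradient f x₁, x₂ - x₁⟫
        + 1 / (2 * L ℓ) * ‖gradient f x₁ ℓ - gradient f x₂ ℓ‖ ^ 2 := by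
  obtain ⟨hconv, hdiff, hlip⟩ := hf
  intro ℓ x₁ x₂
  have hLℓ := hL ℓ
  set g₁ := gradient f x₁ ℓ with hg₁
  set g₂ := gradient f x₂ ℓ with hg₂
  set h : Blk d ℓ := (L ℓ)⁻¹ • (g₁ - g₂) with hh
  set y := x₂ + inj d ℓ h with hy
  have A := descent hdiff hlip ℓ hLℓ x₂ h
  have B := convex_lower hconv hdiff x₁ y
  have hsplit : ⟪gradient f x₁, y - x₁⟫ = ⟪gradient f x₁, x₂ - x₁⟫ + ⟪g₁, h⟫ := by
    have : y - x₁ = (x₂ - x₁) + inj d ℓ h := by rw [hy]; abel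
    rw [this, inner_add_right, inner_inj]
  have hinner : ⟪g₁ - g₂, h⟫ = (L ℓ)⁻¹ * ‖g₁ - g₂‖ ^ 2 := by
    rw [hh, real_inner_smul_right, real_inner_self_eq_norm_sq]
  have hnorm : ‖h‖ ^ 2 = (L ℓ)⁻¹ ^ 2 * ‖g₁ - g₂‖ ^ 2 := by
    rw [hh, norm_smul, mul_pow, Real.norm_eq_abs, abs_of_pos (by positivity)]
  have hinner' : ⟪g₁, h⟫ - ⟪g₂, h⟫ = (L ℓ)⁻¹ * ‖g₁ - g₂‖ ^ 2 := by
    rw [← inner_sub_left]; exact hinner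
  have halg : (L ℓ)⁻¹ * ‖g₁ - g₂‖ ^ 2 - L ℓ / 2 * ((L ℓ)⁻¹ ^ 2 * ‖g₁ - g₂‖ ^ 2)
      = 1 / (2 * L ℓ) * ‖g₁ - g₂‖ ^ 2 := by
    field_simp
    ring
  rw [hsplit] at B
  rw [hnorm] at A
  linarith
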